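/- Let ω > 0 and let ρ : [0,∞) → ℂ be of class C². Then for every t ≥ 0, | ∫₀ᵗ ω ρ(s) sin((t−s)ω) ds − ρ(t) + ρ(0) cos(tω) + (ρ'(0)/ω) sin(tω) | ≤ (t/ω) · sup_{s∈[0,t]} |ρ''(s)|. -/

import Mathlib

noncomputable section

open MeasureTheory Real intervalIntegral

/-- **Oscillatory Duhamel estimate.** For `ω > 0` and a `C²` function `ρ : [0,∞) → ℂ`
(formalized as a `C²` function on `ℝ`), for every `t ≥ 0` and every bound `M` on `ρ''`
on `[0,t]`:
`| ∫₀ᵗ ω ρ(s) sin((t−s)ω) ds − ρ(t) + ρ(0) cos(tω) + (ρ'(0)/ω) sin(tω) | ≤ (t/ω)·M`. -/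
theorem duhamel_oscillatory_estimate
    (ω : ℝ) (hω : 0 < ω) (ρ : ℝ → ℂ) (hρ : ContDiff ℝ 2 ρ)
    (t : ℝ) (ht : 0 ≤ t) (M : ℝ)
    (hM : ∀ s ∈ Set.Icc (0 : ℝ) t, ‖deriv (deriv ρ) s‖ ≤ M) :
    ‖(∫ s in (0 : ℝ)..t, ((ω * Real.sin ((t - s) * ω) : ℝ) : ℂ) * ρ s)
        - ρ t + ρ 0 * ((Real.cos (t * ω) : ℝ) : ℂ)
        + deriv ρ 0 / (ω : ℂ) * ((Real.sin (t * ω) : ℝ) : ℂ)‖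
      ≤ t / ω * M := by
  have hρ2 : ContDiff ℝ (↑(1 + 1)) ρ := by exact_mod_cast hρ
  have h12 := contDiff_succ_iff_deriv.mp hρ2
  have hd : Differentiable ℝ ρ := h12.1
  have hd1 : ContDiff ℝ 1 (deriv ρ) := h12.2.2
  have hd' : Differentiable ℝ (deriv ρ) := hd1.differentiable one_ne_zero
  have hcont2 : Continuous (deriv (deriv ρ)) := hd1.continuous_deriv le_rfl
  set g1 : ℝ → ℂ := fun s => ((ω * Real.sin ((t - s) * ω) : ℝ) : ℂ) * ρ s with hg1
  set g2 : ℝ → ℂ := fun s => ((ω⁻¹ * Real.sin ((t - s) * ω) : ℝ) : ℂ) * deriv (deriv ρ) s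
    with hg2
  set F : ℝ → ℂ := fun s => ((Real.cos ((t - s) * ω) : ℝ) : ℂ) * ρ s
      + ((ω⁻¹ * Real.sin ((t - s) * ω) : ℝ) : ℂ) * deriv ρ s with hFdef
  have hcont1 : Continuous g1 := by
    apply Continuous.mul
    · exact Complex.continuous_ofReal.comp
        (continuous_const.mul (Real.continuous_sin.comp ((continuous_const.sub continuous_id).mul continuous_const)))
    · exact hρ.continuous
  have hcont2' : Continuous g2 := by
    apply Continuous.mul
    · exact Complex.continuous_ofReal.comp
        (continuous_const.mul (Real.continuous_sin.comp ((continuous_const.sub continuous_id).mul continuous_const)))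
    · exact hcont2
  have hF : ∀ s ∈ Set.uIcc (0 : ℝ) t, HasDerivAt F (g1 s + g2 s) s := by
    intro s _
    have h1 : HasDerivAt (fun s : ℝ => (t - s) * ω) (-ω) s := by
      simpa using ((hasDerivAt_id s).const_sub t).mul_const ω
    have hcos : HasDerivAt (fun s : ℝ => Real.cos ((t - s) * ω))
        (ω * Real.sin ((t - s) * ω)) s := by
      have := (Real.hasDerivAt_cos ((t - s) * ω)).comp s h1
      exact this.congr_deriv (by ring)
    have hsin : HasDerivAt (fun s : ℝ => ω⁻¹ * Real.sin ((t - s) * ω))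
        (-Real.cos ((t - s) * ω)) s := by
      have := ((Real.hasDerivAt_sin ((t - s) * ω)).comp s h1).const_mul ω⁻¹
      refine this.congr_deriv ?_
      field_simp
    have hρs : HasDerivAt ρ (deriv ρ s) s := (hd s).hasDerivAt
    have hρ's : HasDerivAt (deriv ρ) (deriv (deriv ρ) s) s := (hd' s).hasDerivAt
    have hA := (hcos.ofReal_comp).mul hρs
    have hB := (hsin.ofReal_comp).mul hρ's
    have := hA.add hB
    refine this.congr_deriv ?_
    simp only [hg1, hg2]
    push_cast
    ring
  have hint : IntervalIntegrable (fun s => g1 s + g2 s) volume 0 t :=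
    (hcont1.add hcont2').intervalIntegrable 0 t
  have key := intervalIntegral.integral_eq_sub_of_hasDerivAt hF hint
  rw [intervalIntegral.integral_add (hcont1.intervalIntegrable 0 t)
    (hcont2'.intervalIntegrable 0 t)] at key
  have hFt : F t = ρ t := by
    simp [hFdef]
  have hF0 : F 0 = ((Real.cos (t * ω) : ℝ) : ℂ) * ρ 0
      + ((ω⁻¹ * Real.sin (t * ω) : ℝ) : ℂ) * deriv ρ 0 := by
    simp [hFdef]
  have hωC : (ω : ℂ) ≠ 0 := by exact_mod_cast hω.ne'
  have heq : (∫ s in (0 : ℝ)..t, g1 s) - ρ t + ρ 0 * ((Real.cos (t * ω) : ℝ) : ℂ)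
      + deriv ρ 0 / (ω : ℂ) * ((Real.sin (t * ω) : ℝ) : ℂ)
      = -(∫ s in (0 : ℝ)..t, g2 s) := by
    have : (∫ s in (0 : ℝ)..t, g1 s) = F t - F 0 - (∫ s in (0 : ℝ)..t, g2 s) := by
      linear_combination key
    rw [this, hFt, hF0]
    push_cast
    field_simp
    ring
  rw [heq, norm_neg]
  have hM0 : 0 ≤ M := le_trans (norm_nonneg _) (hM 0 ⟨le_refl 0, ht⟩)
  have hbound : ∀ s ∈ Set.uIoc (0 : ℝ) t, ‖g2 s‖ ≤ ω⁻¹ * M := by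
    intro s hs
    rw [Set.uIoc_of_le ht] at hs
    have hs' : s ∈ Set.Icc (0 : ℝ) t := ⟨hs.1.le, hs.2⟩
    have : ‖g2 s‖ = |ω⁻¹ * Real.sin ((t - s) * ω)| * ‖deriv (deriv ρ) s‖ := by
      rw [hg2]; rw [norm_mul, Complex.norm_real, Real.norm_eq_abs]
    rw [this]
    have h1 : |ω⁻¹ * Real.sin ((t - s) * ω)| ≤ ω⁻¹ := by
      rw [abs_mul, abs_of_pos (inv_pos.mpr hω)]
      calc ω⁻¹ * |Real.sin ((t - s) * ω)| ≤ ω⁻¹ * 1 := by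
            exact mul_le_mul_of_nonneg_left (abs_le.mpr ⟨Real.neg_one_le_sin _, Real.sin_le_one _⟩) (inv_pos.mpr hω).le
        _ = ω⁻¹ := mul_one _
    exact mul_le_mul h1 (hM s hs') (norm_nonneg _) (inv_pos.mpr hω).le
  calc ‖∫ s in (0 : ℝ)..t, g2 s‖ ≤ ω⁻¹ * M * |t - 0| :=
        intervalIntegral.norm_integral_le_of_norm_le_const hbound
    _ = t / ω * M := by rw [sub_zero, abs_of_nonneg ht]; field_simp
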